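/- Let x_k = −4 + 4k for k = 0,…,5 and (y₀,…,y₅) = (28, 20, 4, 4, 28, 52), so that (x_k, ±y_k) are the rational points of Y² = X³ − 112X + 400 with these x-coordinates. Then for every choice of signs ε₀,…,ε₅ ∈ {1, −1}, every permutation σ of {0,…,5}, and all r, b, e ∈ ℚ, the equations ε_k·y_k − r·x_k = b + σ(k)·e (k = 0,…,5) cannot all hold. Consequently, no shear Y' = Y − rX (followed by a translation of Y) turns the x-arithmetic progression −4, 0, 4, 8, 12, 16 on Y² = X³ − 112X + 400 into a simultaneous arithmetic progression of length 6. -/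

import Mathlib

def sg (b : Bool) : ℤ := cond b 1 (-1)

theorem key1 : ∀ s0 s1 s2 : Bool, sg s2 * 4 - 2 * (sg s1 * 20) + sg s0 * 28 ≠ 0 := by decide

set_option synthInstance.maxSize 4000 in
set_option synthInstance.maxHeartbeats 1000000 in
set_option maxHeartbeats 10000000 in
set_option maxRecDepth 10000 in
theorem key : ∀ s0 s1 s2 s3 s4 s5 : Bool,
    ∀ n0 n1 : Fin 6, n1 ≠ n0 → ∀ n2 : Fin 6, n2 ≠ n0 → n2 ≠ n1 →
    ((n2:ℕ):ℤ) - 2*((n1:ℕ):ℤ) + ((n0:ℕ):ℤ) ≠ 0 →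
    ∀ n3 : Fin 6, n3 ≠ n0 → n3 ≠ n1 → n3 ≠ n2 →
    (sg s3 * 4 - 2*(sg s2 * 4) + sg s1 * 20) * (((n2:ℕ):ℤ) - 2*((n1:ℕ):ℤ) + ((n0:ℕ):ℤ))
      = (sg s2 * 4 - 2*(sg s1 * 20) + sg s0 * 28) * (((n3:ℕ):ℤ) - 2*((n2:ℕ):ℤ) + ((n1:ℕ):ℤ)) →
    ∀ n4 : Fin 6, n4 ≠ n0 → n4 ≠ n1 → n4 ≠ n2 → n4 ≠ n3 →
    (sg s4 * 28 - 2*(sg s3 * 4) + sg s2 * 4) * (((n2:ℕ):ℤ) - 2*((n1:ℕ):ℤ) + ((n0:ℕ):ℤ))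
      = (sg s2 * 4 - 2*(sg s1 * 20) + sg s0 * 28) * (((n4:ℕ):ℤ) - 2*((n3:ℕ):ℤ) + ((n2:ℕ):ℤ)) →
    ∀ n5 : Fin 6, n5 ≠ n0 → n5 ≠ n1 → n5 ≠ n2 → n5 ≠ n3 → n5 ≠ n4 →
    (sg s5 * 52 - 2*(sg s4 * 28) + sg s3 * 4) * (((n2:ℕ):ℤ) - 2*((n1:ℕ):ℤ) + ((n0:ℕ):ℤ))
      = (sg s2 * 4 - 2*(sg s1 * 20) + sg s0 * 28) * (((n5:ℕ):ℤ) - 2*((n4:ℕ):ℤ) + ((n3:ℕ):ℤ)) →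
    False := by decide

theorem no_sap_of_length_six_on_support :
    let x : Fin 6 → ℚ := fun k => -4 + 4 * (k : ℕ)
    let y : Fin 6 → ℚ := ![28, 20, 4, 4, 28, 52]
    ∀ ε : Fin 6 → ℚ, (∀ k : Fin 6, ε k = 1 ∨ ε k = -1) →
      ∀ σ : Equiv.Perm (Fin 6), ∀ r b e : ℚ,
        ¬ ∀ k : Fin 6, ε k * y k - r * x k = b + ((σ k : ℕ) : ℚ) * e := by
  intro x y ε hε σ r b e H
  set s : Fin 6 → Bool := fun k => if ε k = 1 then true else false with hsdef
  have hs : ∀ k, ε k = ((sg (s k) : ℤ) : ℚ) := by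
    set_option linter.unnecessarySeqFocus false in
    intro k; rcases hε k with h | h <;> rw [hsdef] <;> simp [h, sg] <;> norm_num
  have h0 := H 0; have h1 := H 1; have h2 := H 2
  have h3 := H 3; have h4 := H 4; have h5 := H 5
  norm_num [x, y, show ((1:Fin 6):ℕ) = 1 from rfl, show ((2:Fin 6):ℕ) = 2 from rfl,
    show ((3:Fin 6):ℕ) = 3 from rfl, show ((4:Fin 6):ℕ) = 4 from rfl,
    show ((5:Fin 6):ℕ) = 5 from rfl,
    show (![28,20,4,4,28,52] : Fin 6 → ℚ) 2 = 4 from rfl,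
    show (![28,20,4,4,28,52] : Fin 6 → ℚ) 3 = 4 from rfl,
    show (![28,20,4,4,28,52] : Fin 6 → ℚ) 4 = 28 from rfl,
    show (![28,20,4,4,28,52] : Fin 6 → ℚ) 5 = 52 from rfl] at h0 h1 h2 h3 h4 h5
  -- second-difference equations: w_k = c_k * e
  have E1 : ε 2 * 4 - 2*(ε 1*20) + ε 0*28
      = ((((σ 2 : Fin 6) : ℕ) : ℚ) - 2*(((σ 1 : Fin 6) : ℕ) : ℚ) + (((σ 0 : Fin 6) : ℕ) : ℚ)) * e := by
    linear_combination h2 - 2*h1 + h0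
  have E2 : ε 3 * 4 - 2*(ε 2*4) + ε 1*20
      = ((((σ 3 : Fin 6) : ℕ) : ℚ) - 2*(((σ 2 : Fin 6) : ℕ) : ℚ) + (((σ 1 : Fin 6) : ℕ) : ℚ)) * e := by
    linear_combination h3 - 2*h2 + h1
  have E3 : ε 4 * 28 - 2*(ε 3*4) + ε 2*4
      = ((((σ 4 : Fin 6) : ℕ) : ℚ) - 2*(((σ 3 : Fin 6) : ℕ) : ℚ) + (((σ 2 : Fin 6) : ℕ) : ℚ)) * e := by
    linear_combination h4 - 2*h3 + h2
  have E4 : ε 5 * 52 - 2*(ε 4*28) + ε 3*4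
      = ((((σ 5 : Fin 6) : ℕ) : ℚ) - 2*(((σ 4 : Fin 6) : ℕ) : ℚ) + (((σ 3 : Fin 6) : ℕ) : ℚ)) * e := by
    linear_combination h5 - 2*h4 + h3
  simp only [hs 0, hs 1, hs 2, hs 3, hs 4, hs 5] at E1 E2 E3 E4
  -- c1 ≠ 0 over ℤ
  have hc1 : (((σ 2 : Fin 6) : ℕ) : ℤ) - 2*(((σ 1 : Fin 6) : ℕ) : ℤ) + (((σ 0 : Fin 6) : ℕ) : ℤ) ≠ 0 := by
    intro h
    have hq : ((((σ 2 : Fin 6) : ℕ) : ℚ) - 2*(((σ 1 : Fin 6) : ℕ) : ℚ) + (((σ 0 : Fin 6) : ℕ) : ℚ)) = 0 := by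
      exact_mod_cast h
    rw [hq, zero_mul] at E1
    exact key1 (s 0) (s 1) (s 2) (by exact_mod_cast E1)
  -- cross products over ℚ, then ℤ
  have P2 : (sg (s 3) * 4 - 2*(sg (s 2) * 4) + sg (s 1) * 20)
        * ((((σ 2 : Fin 6) : ℕ):ℤ) - 2*(((σ 1 : Fin 6) : ℕ):ℤ) + (((σ 0 : Fin 6) : ℕ):ℤ))
      = (sg (s 2) * 4 - 2*(sg (s 1) * 20) + sg (s 0) * 28)
        * ((((σ 3 : Fin 6) : ℕ):ℤ) - 2*(((σ 2 : Fin 6) : ℕ):ℤ) + (((σ 1 : Fin 6) : ℕ):ℤ)) := by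
    have : ((sg (s 3) : ℚ) * 4 - 2*((sg (s 2) : ℚ) * 4) + (sg (s 1) : ℚ) * 20)
        * ((((σ 2 : Fin 6) : ℕ):ℚ) - 2*(((σ 1 : Fin 6) : ℕ):ℚ) + (((σ 0 : Fin 6) : ℕ):ℚ))
      = ((sg (s 2) : ℚ) * 4 - 2*((sg (s 1) : ℚ) * 20) + (sg (s 0) : ℚ) * 28)
        * ((((σ 3 : Fin 6) : ℕ):ℚ) - 2*(((σ 2 : Fin 6) : ℕ):ℚ) + (((σ 1 : Fin 6) : ℕ):ℚ)) := by
      linear_combination ((((σ 2 : Fin 6) : ℕ):ℚ) - 2*(((σ 1 : Fin 6) : ℕ):ℚ) + (((σ 0 : Fin 6) : ℕ):ℚ)) * E2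
        - ((((σ 3 : Fin 6) : ℕ):ℚ) - 2*(((σ 2 : Fin 6) : ℕ):ℚ) + (((σ 1 : Fin 6) : ℕ):ℚ)) * E1
    exact_mod_cast this
  have P3 : (sg (s 4) * 28 - 2*(sg (s 3) * 4) + sg (s 2) * 4)
        * ((((σ 2 : Fin 6) : ℕ):ℤ) - 2*(((σ 1 : Fin 6) : ℕ):ℤ) + (((σ 0 : Fin 6) : ℕ):ℤ))
      = (sg (s 2) * 4 - 2*(sg (s 1) * 20) + sg (s 0) * 28)
        * ((((σ 4 : Fin 6) : ℕ):ℤ) - 2*(((σ 3 : Fin 6) : ℕ):ℤ) + (((σ 2 : Fin 6) : ℕ):ℤ)) := by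
    have : ((sg (s 4) : ℚ) * 28 - 2*((sg (s 3) : ℚ) * 4) + (sg (s 2) : ℚ) * 4)
        * ((((σ 2 : Fin 6) : ℕ):ℚ) - 2*(((σ 1 : Fin 6) : ℕ):ℚ) + (((σ 0 : Fin 6) : ℕ):ℚ))
      = ((sg (s 2) : ℚ) * 4 - 2*((sg (s 1) : ℚ) * 20) + (sg (s 0) : ℚ) * 28)
        * ((((σ 4 : Fin 6) : ℕ):ℚ) - 2*(((σ 3 : Fin 6) : ℕ):ℚ) + (((σ 2 : Fin 6) : ℕ):ℚ)) := by
      linear_combination ((((σ 2 : Fin 6) : ℕ):ℚ) - 2*(((σ 1 : Fin 6) : ℕ):ℚ) + (((σ 0 : Fin 6) : ℕ):ℚ)) * E3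
        - ((((σ 4 : Fin 6) : ℕ):ℚ) - 2*(((σ 3 : Fin 6) : ℕ):ℚ) + (((σ 2 : Fin 6) : ℕ):ℚ)) * E1
    exact_mod_cast this
  have P4 : (sg (s 5) * 52 - 2*(sg (s 4) * 28) + sg (s 3) * 4)
        * ((((σ 2 : Fin 6) : ℕ):ℤ) - 2*(((σ 1 : Fin 6) : ℕ):ℤ) + (((σ 0 : Fin 6) : ℕ):ℤ))
      = (sg (s 2) * 4 - 2*(sg (s 1) * 20) + sg (s 0) * 28)
        * ((((σ 5 : Fin 6) : ℕ):ℤ) - 2*(((σ 4 : Fin 6) : ℕ):ℤ) + (((σ 3 : Fin 6) : ℕ):ℤ)) := by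
    have : ((sg (s 5) : ℚ) * 52 - 2*((sg (s 4) : ℚ) * 28) + (sg (s 3) : ℚ) * 4)
        * ((((σ 2 : Fin 6) : ℕ):ℚ) - 2*(((σ 1 : Fin 6) : ℕ):ℚ) + (((σ 0 : Fin 6) : ℕ):ℚ))
      = ((sg (s 2) : ℚ) * 4 - 2*((sg (s 1) : ℚ) * 20) + (sg (s 0) : ℚ) * 28)
        * ((((σ 5 : Fin 6) : ℕ):ℚ) - 2*(((σ 4 : Fin 6) : ℕ):ℚ) + (((σ 3 : Fin 6) : ℕ):ℚ)) := by
      linear_combination ((((σ 2 : Fin 6) : ℕ):ℚ) - 2*(((σ 1 : Fin 6) : ℕ):ℚ) + (((σ 0 : Fin 6) : ℕ):ℚ)) * E4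
        - ((((σ 5 : Fin 6) : ℕ):ℚ) - 2*(((σ 4 : Fin 6) : ℕ):ℚ) + (((σ 3 : Fin 6) : ℕ):ℚ)) * E1
    exact_mod_cast this
  have hne : ∀ a c : Fin 6, a ≠ c → σ a ≠ σ c := fun a c hac h => hac (σ.injective h)
  exact key (s 0) (s 1) (s 2) (s 3) (s 4) (s 5) (σ 0) (σ 1) (hne 1 0 (by decide))
    (σ 2) (hne 2 0 (by decide)) (hne 2 1 (by decide)) hc1
    (σ 3) (hne 3 0 (by decide)) (hne 3 1 (by decide)) (hne 3 2 (by decide)) P2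
    (σ 4) (hne 4 0 (by decide)) (hne 4 1 (by decide)) (hne 4 2 (by decide)) (hne 4 3 (by decide)) P3
    (σ 5) (hne 5 0 (by decide)) (hne 5 1 (by decide)) (hne 5 2 (by decide)) (hne 5 3 (by decide)) (hne 5 4 (by decide)) P4
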